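/- Let H be a complex Hilbert space, Ω ∈ H a unit vector, and A ⊆ B(H) a set of operators such that ‖a Ω‖ = ‖a* Ω‖ for every a ∈ A. Let n ≥ 1 and let r₁,…,rₙ, z₁,…,zₙ ∈ B(H) satisfy: (i) the vectors r₁Ω,…,rₙΩ form an orthonormal family in H; (ii) rⱼ*Ω = 0 for every j; (iii) rⱼ + zⱼ ∈ A and rⱼ* − zⱼ ∈ A for every j. Then √n ≤ ‖Σⱼ zⱼ zⱼ*‖^{1/2} + ‖Σⱼ zⱼ* zⱼ‖^{1/2}. -/

import Mathlib

open ContinuousLinearMap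

/-- If `Ω` is a unit vector, `A ⊆ B(H)` is a set of operators with `‖a Ω‖ = ‖a* Ω‖` for
`a ∈ A`, the vectors `rⱼ Ω` are orthonormal, `rⱼ* Ω = 0`, and `rⱼ + zⱼ, rⱼ* − zⱼ ∈ A`,
then `√n ≤ ‖∑ zⱼ zⱼ*‖^(1/2) + ‖∑ zⱼ* zⱼ‖^(1/2)`. -/
theorem stmt10 {H : Type*} [NormedAddCommGroup H] [InnerProductSpace ℂ H] [CompleteSpace H]
    (Ω : H) (hΩ : ‖Ω‖ = 1) (A : Set (H →L[ℂ] H))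
    (hA : ∀ a ∈ A, ‖a Ω‖ = ‖adjoint a Ω‖)
    (n : ℕ) (hn : 1 ≤ n) (r z : Fin n → (H →L[ℂ] H))
    (horth : Orthonormal ℂ (fun j => r j Ω))
    (hr : ∀ j, adjoint (r j) Ω = 0)
    (hrz : ∀ j, r j + z j ∈ A ∧ adjoint (r j) - z j ∈ A) :
    Real.sqrt n ≤
      Real.sqrt ‖∑ j, z j * adjoint (z j)‖ + Real.sqrt ‖∑ j, adjoint (z j) * z j‖ := by
  set a : Fin n → ℝ := fun j => ‖adjoint (z j) Ω‖ with ha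
  set b : Fin n → ℝ := fun j => ‖(z j) Ω‖ with hb
  set P : ℝ := ‖∑ j, z j * adjoint (z j)‖ with hP
  set Q : ℝ := ‖∑ j, adjoint (z j) * z j‖ with hQ
  -- each 1 ≤ a j + b j
  have hab : ∀ j, (1:ℝ) ≤ a j + b j := by
    intro j
    have h := hA _ (hrz j).1
    have hadj : adjoint (r j + z j) Ω = adjoint (z j) Ω := by
      rw [map_add, add_apply, hr j, zero_add]
    rw [hadj, add_apply] at h
    have h1 : ‖r j Ω‖ ≤ ‖r j Ω + z j Ω‖ + ‖z j Ω‖ := by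
      calc ‖r j Ω‖ = ‖(r j Ω + z j Ω) - z j Ω‖ := by rw [add_sub_cancel_right]
        _ ≤ ‖r j Ω + z j Ω‖ + ‖z j Ω‖ := norm_sub_le _ _
    have := horth.1 j
    simp only at this
    rw [this, h] at h1
    exact h1
  -- sum of squares bounds
  have key : ∀ (T : Fin n → (H →L[ℂ] H)),
      ∑ j, RCLike.re (inner (𝕜 := ℂ) Ω (T j Ω)) ≤ ‖∑ j, T j‖ := by
    intro T
    set S : H →L[ℂ] H := ∑ j, T j with hSdef
    have hS : (∑ j, T j Ω) = S Ω := by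
      rw [hSdef, ContinuousLinearMap.sum_apply]
    calc ∑ j, RCLike.re (inner (𝕜 := ℂ) Ω (T j Ω))
        = RCLike.re (inner (𝕜 := ℂ) Ω (∑ j, T j Ω)) := by rw [inner_sum, map_sum]
      _ ≤ ‖inner (𝕜 := ℂ) Ω (S Ω)‖ := by rw [hS]; exact RCLike.re_le_norm _
      _ ≤ ‖Ω‖ * ‖S Ω‖ := norm_inner_le_norm _ _
      _ ≤ ‖Ω‖ * (‖S‖ * ‖Ω‖) := by gcongr; exact le_opNorm S Ω
      _ = ‖S‖ := by rw [hΩ]; ring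
  have hS1 : ∑ j, a j ^ 2 ≤ P := by
    have := key (fun j => z j * adjoint (z j))
    refine le_trans (le_of_eq (Finset.sum_congr rfl fun j _ => ?_)) this
    rw [ha]
    rw [← @inner_self_eq_norm_sq ℂ]
    rw [adjoint_inner_left, ContinuousLinearMap.mul_apply]
  have hS2 : ∑ j, b j ^ 2 ≤ Q := by
    have := key (fun j => adjoint (z j) * z j)
    refine le_trans (le_of_eq (Finset.sum_congr rfl fun j _ => ?_)) this
    rw [hb]
    rw [← @inner_self_eq_norm_sq ℂ]
    rw [ContinuousLinearMap.mul_apply, adjoint_inner_right]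
  -- Cauchy-Schwarz for sums
  have hcs : ∀ (f : Fin n → ℝ) (C : ℝ), (∀ j, 0 ≤ f j) → (∑ j, f j ^ 2) ≤ C →
      ∑ j, f j ≤ Real.sqrt n * Real.sqrt C := by
    intro f C hf hC
    have h1 : (∑ j, f j) ^ 2 ≤ n * C := by
      calc (∑ j, f j) ^ 2 ≤ (Finset.univ.card : ℝ) * ∑ j, f j ^ 2 :=
            sq_sum_le_card_mul_sum_sq
        _ = n * ∑ j, f j ^ 2 := by simp
        _ ≤ n * C := by gcongr
    have h2 : (0:ℝ) ≤ ∑ j, f j := Finset.sum_nonneg fun j _ => hf j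
    calc ∑ j, f j = Real.sqrt ((∑ j, f j) ^ 2) := (Real.sqrt_sq h2).symm
      _ ≤ Real.sqrt (n * C) := Real.sqrt_le_sqrt h1
      _ = Real.sqrt n * Real.sqrt C := Real.sqrt_mul (Nat.cast_nonneg n) C
  have hCa : ∑ j, a j ≤ Real.sqrt n * Real.sqrt P :=
    hcs a P (fun j => norm_nonneg _) hS1
  have hCb : ∑ j, b j ≤ Real.sqrt n * Real.sqrt Q :=
    hcs b Q (fun j => norm_nonneg _) hS2
  have hnsum : (n:ℝ) ≤ Real.sqrt n * (Real.sqrt P + Real.sqrt Q) := by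
    calc (n:ℝ) = ∑ _j : Fin n, (1:ℝ) := by simp
      _ ≤ ∑ j, (a j + b j) := Finset.sum_le_sum fun j _ => hab j
      _ = ∑ j, a j + ∑ j, b j := Finset.sum_add_distrib
      _ ≤ Real.sqrt n * Real.sqrt P + Real.sqrt n * Real.sqrt Q := add_le_add hCa hCb
      _ = Real.sqrt n * (Real.sqrt P + Real.sqrt Q) := by ring
  have hpos : (0:ℝ) < Real.sqrt n := Real.sqrt_pos.mpr (by exact_mod_cast hn)
  have : Real.sqrt n * Real.sqrt n ≤ Real.sqrt n * (Real.sqrt P + Real.sqrt Q) := by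
    rw [Real.mul_self_sqrt (Nat.cast_nonneg n)]; exact hnsum
  exact le_of_mul_le_mul_left this hpos
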